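/- arXiv:2206.06997 — 4 statements merged into one kernel-verified Lean document; each statement's English description precedes it below -/
import Mathlib

section
/- Let τ > 0, m₁ > 0, m₂ ∈ ℝ, T_off > 0, T_on^min > 0, I_max ≥ 0, A_ub ≥ 0, ω_l ≥ 0. Set d = exp(−T_on^min/τ) and b = exp(−(T_on^min + T_off)/τ). Let g : ℝ → ℝ be differentiable with |g′(t)| ≤ A_ub/τ for all t ≥ 0 and |g(0)| ≤ A_ub/√(1 + ω_l²τ²). If (A_ub/τ)·(1 + d/√(1 + ω_l²τ²)) + (b/τ)·I_max < m₁·(1 − d), then for every i_p ≥ m₂·T_off and every i_c with 0 ≤ i_c ≤ I_max, the filtered current-sense signal v(t) = (i_p − m₂T_off)(1 − e^{−t/τ}) + i_c·e^{−T_off/τ}·e^{−t/τ} + m₁(t + (e^{−t/τ} − 1)τ) + g(t) − g(0)·e^{−t/τ} has strictly positive derivative at every t ≥ T_on^min; in particular v is strictly increasing on [T_on^min, ∞). -/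
set_option maxHeartbeats 1000000


open Real Set

theorem stmt_0
    (τ m₁ m₂ T_off T_on_min I_max A_ub ω_l : ℝ)
    (hτ : 0 < τ) (hm₁ : 0 < m₁) (hToff : 0 < T_off) (hTon : 0 < T_on_min)
    (hImax : 0 ≤ I_max) (hA : 0 ≤ A_ub) (hωl : 0 ≤ ω_l)
    (d b : ℝ)
    (hd : d = Real.exp (-(T_on_min / τ)))
    (hb : b = Real.exp (-((T_on_min + T_off) / τ)))
    (g : ℝ → ℝ) (hg : Differentiable ℝ g)
    (hg' : ∀ t ≥ (0:ℝ), |deriv g t| ≤ A_ub / τ)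
    (hg0 : |g 0| ≤ A_ub / Real.sqrt (1 + ω_l ^ 2 * τ ^ 2))
    (hcond : A_ub / τ * (1 + d / Real.sqrt (1 + ω_l ^ 2 * τ ^ 2)) + b / τ * I_max
        < m₁ * (1 - d)) :
    ∀ i_p ≥ m₂ * T_off, ∀ i_c, 0 ≤ i_c → i_c ≤ I_max →
      (∀ t ≥ T_on_min,
        0 < deriv (fun t : ℝ =>
          (i_p - m₂ * T_off) * (1 - Real.exp (-(t / τ)))
          + i_c * Real.exp (-(T_off / τ)) * Real.exp (-(t / τ))
          + m₁ * (t + (Real.exp (-(t / τ)) - 1) * τ)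
          + g t - g 0 * Real.exp (-(t / τ))) t)
      ∧ StrictMonoOn (fun t : ℝ =>
          (i_p - m₂ * T_off) * (1 - Real.exp (-(t / τ)))
          + i_c * Real.exp (-(T_off / τ)) * Real.exp (-(t / τ))
          + m₁ * (t + (Real.exp (-(t / τ)) - 1) * τ)
          + g t - g 0 * Real.exp (-(t / τ))) (Set.Ici T_on_min) := by
  intro i_p hip i_c hic0 hic1
  set s : ℝ := Real.sqrt (1 + ω_l ^ 2 * τ ^ 2) with hs
  have hs1 : (1:ℝ) ≤ s := by
    nlinarith [Real.sq_sqrt (show (0:ℝ) ≤ 1 + ω_l ^ 2 * τ ^ 2 by positivity),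
      Real.sqrt_nonneg (1 + ω_l ^ 2 * τ ^ 2), sq_nonneg (ω_l * τ), hs]
  have hs0 : 0 < s := lt_of_lt_of_le one_pos hs1
  -- derivative of the exponential kernel
  have hE : ∀ t : ℝ, HasDerivAt (fun t : ℝ => Real.exp (-(t / τ)))
      (-(1/τ) * Real.exp (-(t / τ))) t := by
    intro t
    have h1 : HasDerivAt (fun t : ℝ => -(t / τ)) (-(1/τ)) t := by
      simpa using ((hasDerivAt_id t).div_const τ).fun_neg
    simpa [mul_comm] using h1.exp
  have hD : ∀ t : ℝ, HasDerivAt (fun t : ℝ =>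
      (i_p - m₂ * T_off) * (1 - Real.exp (-(t / τ)))
      + i_c * Real.exp (-(T_off / τ)) * Real.exp (-(t / τ))
      + m₁ * (t + (Real.exp (-(t / τ)) - 1) * τ)
      + g t - g 0 * Real.exp (-(t / τ)))
      ((i_p - m₂ * T_off) * (0 - -(1/τ) * Real.exp (-(t / τ)))
        + i_c * Real.exp (-(T_off / τ)) * (-(1/τ) * Real.exp (-(t / τ)))
        + m₁ * (1 + -(1/τ) * Real.exp (-(t / τ)) * τ)
        + deriv g t - g 0 * (-(1/τ) * Real.exp (-(t / τ)))) t := by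
    intro t
    have h1 := ((hasDerivAt_const t (1:ℝ)).fun_sub (hE t)).const_mul (i_p - m₂ * T_off)
    have h2 := (hE t).const_mul (i_c * Real.exp (-(T_off / τ)))
    have h3 := (((hasDerivAt_id t).fun_add (((hE t).sub_const 1).mul_const τ)).const_mul m₁)
    have h4 := (hg t).hasDerivAt
    have h5 := (hE t).const_mul (g 0)
    have := (((h1.fun_add h2).fun_add h3).fun_add h4).fun_sub h5
    exact this
  -- positivity of the derivative on [T_on_min, ∞)
  have key : ∀ t ≥ T_on_min,
      0 < (i_p - m₂ * T_off) * (0 - -(1/τ) * Real.exp (-(t / τ)))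
        + i_c * Real.exp (-(T_off / τ)) * (-(1/τ) * Real.exp (-(t / τ)))
        + m₁ * (1 + -(1/τ) * Real.exp (-(t / τ)) * τ)
        + deriv g t - g 0 * (-(1/τ) * Real.exp (-(t / τ))) := by
    intro t ht
    set E : ℝ := Real.exp (-(t / τ)) with hEdef
    have hEpos : 0 < E := Real.exp_pos _
    have hEd : E ≤ d := by
      rw [hd]
      apply Real.exp_le_exp.2
      have h : T_on_min / τ ≤ t / τ := by gcongr
      linarith
    have hdpos : 0 < d := hd ▸ Real.exp_pos _
    have hbpos : 0 < b := hb ▸ Real.exp_pos _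
    have heTE : Real.exp (-(T_off / τ)) * E ≤ b := by
      rw [hEdef, hb, ← Real.exp_add]
      apply Real.exp_le_exp.2
      have h : T_on_min / τ ≤ t / τ := by gcongr
      have h2 : (T_on_min + T_off) / τ = T_on_min / τ + T_off / τ := add_div _ _ _
      linarith
    have hg'_lb : -(A_ub / τ) ≤ deriv g t :=
      neg_le_of_abs_le (hg' t (by linarith))
    have hg0_lb : -(A_ub / s) ≤ g 0 := neg_le_of_abs_le hg0
    -- bounds on individual terms
    have t1 : 0 ≤ (i_p - m₂ * T_off) * (E / τ) := by
      apply mul_nonneg (by linarith) (by positivity)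
    have t2 : i_c * Real.exp (-(T_off / τ)) * E ≤ I_max * b := by
      calc i_c * Real.exp (-(T_off / τ)) * E
          ≤ I_max * (Real.exp (-(T_off / τ)) * E) := by
            rw [mul_assoc]
            exact mul_le_mul_of_nonneg_right hic1 (by positivity)
        _ ≤ I_max * b := mul_le_mul_of_nonneg_left heTE hImax
    have t3 : m₁ * (1 - d) ≤ m₁ * (1 - E) :=
      mul_le_mul_of_nonneg_left (by linarith) hm₁.le
    have t5 : -(A_ub / s) * d ≤ g 0 * E := by
      calc -(A_ub / s) * d ≤ -(A_ub / s) * E := by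
            apply mul_le_mul_of_nonpos_left hEd
            exact neg_nonpos.2 (by positivity)
        _ ≤ g 0 * E := mul_le_mul_of_nonneg_right hg0_lb hEpos.le
    have hτ' : τ ≠ 0 := hτ.ne'
    have expand : (i_p - m₂ * T_off) * (0 - -(1/τ) * E)
        + i_c * Real.exp (-(T_off / τ)) * (-(1/τ) * E)
        + m₁ * (1 + -(1/τ) * E * τ)
        + deriv g t - g 0 * (-(1/τ) * E)
        = (i_p - m₂ * T_off) * (E / τ)
          - (i_c * Real.exp (-(T_off / τ)) * E) / τ
          + m₁ * (1 - E) + deriv g t + (g 0 * E) / τ := by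
      field_simp
      ring
    rw [expand]
    have hcond' : A_ub / τ + (A_ub / s) * d / τ + I_max * b / τ < m₁ * (1 - d) := by
      have : A_ub / τ * (1 + d / s) + b / τ * I_max
          = A_ub / τ + (A_ub / s) * d / τ + I_max * b / τ := by
        field_simp
      linarith [hcond, this.symm ▸ hcond]
    have h2' : (i_c * Real.exp (-(T_off / τ)) * E) / τ ≤ I_max * b / τ := by gcongr
    have h5' : -(A_ub / s * d / τ) ≤ (g 0 * E) / τ := by
      have : -(A_ub / s) * d / τ ≤ (g 0 * E) / τ := by gcongr
      linarith [this, (by ring : -(A_ub / s) * d / τ = -(A_ub / s * d / τ))]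
    clear_value E s
    linarith [t1, t3, h2', h5', hg'_lb, hcond']
  constructor
  · intro t ht
    rw [(hD t).deriv]
    exact key t ht
  · apply StrictMonoOn.mono (s := Set.Ici T_on_min) ?_ le_rfl
    apply strictMonoOn_of_deriv_pos (convex_Ici _)
    · exact Continuous.continuousOn (by
        have : Continuous fun t : ℝ => Real.exp (-(t / τ)) := by continuity
        have := hg.continuous
        fun_prop)
    · intro t ht
      rw [interior_Ici] at ht
      rw [(hD t).deriv]
      exact key t (le_of_lt ht)
end

section
/- Let τ > 0, ω_l ≥ 0, and let W : ℝ → ℂ be integrable with ∫_ℝ |W(ω)| dω ≤ A_ub and W(ω) = 0 for all ω with |ω| < ω_l (the interference is bandwidth-limited from below by ω_l). Then the function g(t) = ∫_ℝ W(ω)·e^{iωt}/(1 + iωτ) dω satisfies |g(t)| ≤ A_ub/√(1 + ω_l²τ²) for every t ∈ ℝ. -/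
open MeasureTheory Complex

theorem stmt_3
    (τ ω_l A_ub : ℝ) (hτ : 0 < τ) (hωl : 0 ≤ ω_l)
    (W : ℝ → ℂ)
    (hW : Integrable W)
    (hA : (∫ ω : ℝ, ‖W ω‖) ≤ A_ub)
    (hband : ∀ ω : ℝ, |ω| < ω_l → W ω = 0) :
    ∀ t : ℝ,
      ‖∫ ω : ℝ, W ω * Complex.exp (Complex.I * ω * t) / (1 + Complex.I * ω * τ)‖
        ≤ A_ub / Real.sqrt (1 + ω_l ^ 2 * τ ^ 2) := by
  intro t
  set c : ℝ := Real.sqrt (1 + ω_l ^ 2 * τ ^ 2) with hc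
  have hc1 : (1:ℝ) ≤ 1 + ω_l ^ 2 * τ ^ 2 := by nlinarith [sq_nonneg (ω_l*τ)]
  have hcpos : 0 < c := Real.sqrt_pos.mpr (by linarith)
  have hbound : ∀ ω : ℝ,
      ‖W ω * Complex.exp (Complex.I * ω * t) / (1 + Complex.I * ω * τ)‖
        ≤ ‖W ω‖ / c := by
    intro ω
    by_cases h0 : W ω = 0
    · simp [h0]
    · have hω : ω_l ≤ |ω| := by
        by_contra h; exact h0 (hband ω (lt_of_not_ge h))
      have hsq : ω_l ^ 2 ≤ ω ^ 2 := by
        have := sq_le_sq' (by linarith [abs_nonneg ω, neg_abs_le ω]) hω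
        simpa [_root_.sq_abs] using this
      have hden : c ≤ ‖(1 + Complex.I * ω * τ : ℂ)‖ := by
        have habs : ‖(1 + Complex.I * ω * τ : ℂ)‖ = Real.sqrt (1 + ω ^ 2 * τ ^ 2) := by
          rw [Complex.norm_def, Complex.normSq_apply]
          simp
          ring_nf
        rw [habs]
        apply Real.sqrt_le_sqrt
        nlinarith
      rw [norm_div, norm_mul]
      have hexp : ‖Complex.exp (Complex.I * ω * t)‖ = 1 := by
        rw [Complex.norm_exp]
        simp
      rw [hexp, mul_one]
      exact div_le_div_of_nonneg_left (norm_nonneg _) hcpos hden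
  have hInt : Integrable (fun ω => ‖W ω‖ / c) := (hW.norm.div_const c)
  calc ‖∫ ω : ℝ, W ω * Complex.exp (Complex.I * ω * t) / (1 + Complex.I * ω * τ)‖
      ≤ ∫ ω : ℝ, ‖W ω‖ / c :=
        norm_integral_le_of_norm_le hInt (Filter.Eventually.of_forall hbound)
    _ = (∫ ω : ℝ, ‖W ω‖) / c := by rw [integral_div]
    _ ≤ A_ub / c := div_le_div_of_nonneg_right hA hcpos.le |>.trans (le_refl _)
end

section
/- Let ρ ∈ [0, 1) and let a : ℕ → ℝ satisfy |a(n)| ≤ ρ for all n. Let u : ℕ → ℝ be square-summable, and define x : ℕ → ℝ by x(0) = u(0) and x(n+1) = a(n+1)·x(n) + u(n+1). Then x is square-summable and (∑_{n} x(n)²)^{1/2} ≤ (1/(1 − ρ))·(∑_{n} u(n)²)^{1/2}. -/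
theorem stmt_14
    (ρ : ℝ) (hρ0 : 0 ≤ ρ) (hρ1 : ρ < 1)
    (a : ℕ → ℝ) (ha : ∀ n, |a n| ≤ ρ)
    (u : ℕ → ℝ) (hu : Summable (fun n => u n ^ 2))
    (x : ℕ → ℝ) (hx0 : x 0 = u 0)
    (hx : ∀ n : ℕ, x (n + 1) = a (n + 1) * x n + u (n + 1)) :
    Summable (fun n => x n ^ 2) ∧
    Real.sqrt (∑' n, x n ^ 2) ≤ 1 / (1 - ρ) * Real.sqrt (∑' n, u n ^ 2) := by
  have h1ρ : 0 < 1 - ρ := by linarith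
  set S : ℝ := 1 / (1 - ρ) with hSdef
  have hS0 : 0 < S := by positivity
  set c : ℕ → ℝ := fun n => |u n| with hc
  set v : ℕ → ℝ := fun n => ∑ k ∈ Finset.range (n + 1), ρ ^ (n - k) * c k with hv
  -- recursion for v
  have hvrec : ∀ n, v (n + 1) = ρ * v n + c (n + 1) := by
    intro n
    have : v (n + 1) = (∑ k ∈ Finset.range (n + 1), ρ ^ (n + 1 - k) * c k)
        + ρ ^ (n + 1 - (n + 1)) * c (n + 1) := by
      simp [hv, Finset.sum_range_succ]
    rw [this]
    have : (∑ k ∈ Finset.range (n + 1), ρ ^ (n + 1 - k) * c k)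
        = ρ * ∑ k ∈ Finset.range (n + 1), ρ ^ (n - k) * c k := by
      rw [Finset.mul_sum]
      refine Finset.sum_congr rfl fun k hk => ?_
      have hk' : k ≤ n := Nat.lt_succ_iff.mp (Finset.mem_range.mp hk)
      have : n + 1 - k = (n - k) + 1 := by omega
      rw [this, pow_succ]
      ring
    rw [this]
    simp [hv]
  have hcnn : ∀ n, 0 ≤ c n := fun n => abs_nonneg _
  have hvnn : ∀ n, 0 ≤ v n := by
    intro n
    refine Finset.sum_nonneg fun k _ => ?_
    exact mul_nonneg (pow_nonneg hρ0 _) (hcnn k)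
  -- |x n| ≤ v n
  have hxv : ∀ n, |x n| ≤ v n := by
    intro n
    induction n with
    | zero => simp [hv, hx0, hc]
    | succ n ih =>
      rw [hx n, hvrec n]
      calc |a (n + 1) * x n + u (n + 1)| ≤ |a (n + 1) * x n| + |u (n + 1)| := abs_add_le _ _
        _ = |a (n + 1)| * |x n| + c (n + 1) := by rw [abs_mul]
        _ ≤ ρ * v n + c (n + 1) := by
            have := ha (n + 1)
            have habs := abs_nonneg (x n)
            nlinarith [mul_le_mul (ha (n+1)) ih (abs_nonneg (x n)) hρ0]
  -- geometric partial sums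
  have hgeo_sum : Summable (fun m : ℕ => ρ ^ m) := summable_geometric_of_lt_one hρ0 hρ1
  have hgeo_tsum : ∑' m : ℕ, ρ ^ m = S := by
    rw [tsum_geometric_of_lt_one hρ0 hρ1, hSdef, one_div]
  have hgeo_partial : ∀ n : ℕ, (∑ k ∈ Finset.range (n + 1), ρ ^ (n - k)) ≤ S := by
    intro n
    have hre : (∑ k ∈ Finset.range (n + 1), ρ ^ (n - k))
        = ∑ j ∈ Finset.range (n + 1), ρ ^ j := by
      refine Finset.sum_nbij' (fun k => n - k) (fun j => n - j) ?_ ?_ ?_ ?_ ?_ <;>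
        intro a ha <;> simp_all [Finset.mem_range, Nat.lt_succ_iff] <;> omega
    rw [hre, ← hgeo_tsum]
    exact Summable.sum_le_tsum _ (fun i _ => pow_nonneg hρ0 i) hgeo_sum
  -- w and Cauchy-Schwarz
  set w : ℕ → ℝ := fun n => ∑ k ∈ Finset.range (n + 1), u k ^ 2 * ρ ^ (n - k) with hw
  have hwnn : ∀ n, 0 ≤ w n := by
    intro n
    exact Finset.sum_nonneg fun k _ => mul_nonneg (sq_nonneg _) (pow_nonneg hρ0 _)
  have hCS : ∀ n, v n ^ 2 ≤ S * w n := by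
    intro n
    have key := Finset.sum_mul_sq_le_sq_mul_sq (Finset.range (n + 1))
      (fun k => Real.sqrt (ρ ^ (n - k))) (fun k => Real.sqrt (ρ ^ (n - k)) * c k)
    have h1 : ∀ k, Real.sqrt (ρ ^ (n - k)) * (Real.sqrt (ρ ^ (n - k)) * c k)
        = ρ ^ (n - k) * c k := by
      intro k
      rw [← mul_assoc, Real.mul_self_sqrt (pow_nonneg hρ0 _)]
    have h2 : ∀ k, Real.sqrt (ρ ^ (n - k)) ^ 2 = ρ ^ (n - k) := fun k =>
      Real.sq_sqrt (pow_nonneg hρ0 _)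
    have h3 : ∀ k, (Real.sqrt (ρ ^ (n - k)) * c k) ^ 2 = u k ^ 2 * ρ ^ (n - k) := by
      intro k
      rw [mul_pow, h2, hc]
      simp [sq_abs, mul_comm]
    simp only [h1, h2, h3] at key
    calc v n ^ 2 ≤ (∑ k ∈ Finset.range (n + 1), ρ ^ (n - k)) * w n := key
      _ ≤ S * w n := mul_le_mul_of_nonneg_right (hgeo_partial n) (hwnn n)
  -- summability of w via Cauchy product
  have hunorm : Summable (fun n => ‖u n ^ 2‖) := by
    have : ∀ n, ‖u n ^ 2‖ = u n ^ 2 := fun n => by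
      rw [Real.norm_eq_abs, abs_of_nonneg (sq_nonneg _)]
    simpa [this] using hu
  have hgnorm : Summable (fun m : ℕ => ‖ρ ^ m‖) := by
    have : ∀ m : ℕ, ‖ρ ^ m‖ = ρ ^ m := fun m => by
      rw [Real.norm_eq_abs, abs_of_nonneg (pow_nonneg hρ0 _)]
    simpa [this] using hgeo_sum
  have hwsummable : Summable w := by
    have := summable_norm_sum_mul_range_of_summable_norm hunorm hgnorm
    exact this.of_norm
  have hwtsum : ∑' n, w n = (∑' n, u n ^ 2) * S := by
    rw [← hgeo_tsum, tsum_mul_tsum_eq_tsum_sum_range_of_summable_norm hunorm hgnorm]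
  -- summability of x^2 and bound on tsum
  have hxw : ∀ n, x n ^ 2 ≤ S * w n := by
    intro n
    calc x n ^ 2 = |x n| ^ 2 := (sq_abs _).symm
      _ ≤ v n ^ 2 := by
          have := hxv n
          nlinarith [abs_nonneg (x n)]
      _ ≤ S * w n := hCS n
  have hxsummable : Summable (fun n => x n ^ 2) :=
    Summable.of_nonneg_of_le (fun n => sq_nonneg _) hxw (hwsummable.mul_left S)
  refine ⟨hxsummable, ?_⟩
  have htsum_le : ∑' n, x n ^ 2 ≤ S ^ 2 * ∑' n, u n ^ 2 := by
    calc ∑' n, x n ^ 2 ≤ ∑' n, S * w n := Summable.tsum_le_tsum hxw hxsummable (hwsummable.mul_left S)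
      _ = S * ∑' n, w n := tsum_mul_left
      _ = S ^ 2 * ∑' n, u n ^ 2 := by rw [hwtsum]; ring
  calc Real.sqrt (∑' n, x n ^ 2) ≤ Real.sqrt (S ^ 2 * ∑' n, u n ^ 2) :=
        Real.sqrt_le_sqrt htsum_le
    _ = S * Real.sqrt (∑' n, u n ^ 2) := by
        rw [Real.sqrt_mul (sq_nonneg S), Real.sqrt_sq hS0.le]
end

section
/- Let τ > 0, T_on > 0, T_off > 0, and let I_c, I_p, m₂ be real numbers. Let w : ℝ → ℝ be continuous and bounded, define g(t) = ∫_{−∞}^{t} w(s)·(1/τ)e^{−(t−s)/τ} ds and y(t) = ∫_0^t w(s)·(1/τ)e^{−(t−s)/τ} ds, and define ξ(t̃) = (I_c·e^{−T_off/τ} − (I_p − m₂T_off))·(e^{−(T_on+t̃)/τ} − e^{−T_on/τ}) + y(T_on + t̃) − y(T_on) for t̃ > −T_on. Then ξ is differentiable and for every t̃ > −T_on, writing s = T_on + t̃: ξ′(t̃) = ψ₁(s) + ψ₂(s), where ψ₁(s) = g′(s) + (e^{−s/τ}/τ)·g(0) and ψ₂(s) = ((I_p − m₂T_off)/τ)·e^{−s/τ}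 − (I_c/τ)·e^{−(s+T_off)/τ}. -/
open MeasureTheory

set_option maxHeartbeats 1000000

theorem stmt_15
    (τ T_on T_off : ℝ) (hτ : 0 < τ) (hTon : 0 < T_on) (hToff : 0 < T_off)
    (I_c I_p m₂ : ℝ)
    (w : ℝ → ℝ) (hcont : Continuous w) (C : ℝ) (hbdd : ∀ s, |w s| ≤ C)
    (g y ξ : ℝ → ℝ)
    (hg : ∀ t : ℝ, g t = ∫ s in Set.Iic t, w s * (1 / τ * Real.exp (-((t - s) / τ))))
    (hy : ∀ t : ℝ, y t = ∫ s in (0:ℝ)..t, w s * (1 / τ * Real.exp (-((t - s) / τ))))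
    (hξ : ∀ t' : ℝ, ξ t' =
      (I_c * Real.exp (-(T_off / τ)) - (I_p - m₂ * T_off))
        * (Real.exp (-((T_on + t') / τ)) - Real.exp (-(T_on / τ)))
      + y (T_on + t') - y T_on) :
    ∀ t' : ℝ, -T_on < t' →
      HasDerivAt ξ
        ((deriv g (T_on + t') + Real.exp (-((T_on + t') / τ)) / τ * g 0)
         + ((I_p - m₂ * T_off) / τ * Real.exp (-((T_on + t') / τ))
            - I_c / τ * Real.exp (-((T_on + t' + T_off) / τ)))) t' := by
  intro t' ht'
  set φ : ℝ → ℝ := fun s => w s * Real.exp (s / τ) with hφ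
  have hφcont : Continuous φ :=
    hcont.mul (Real.continuous_exp.comp (continuous_id.div_const τ))
  -- integrability of φ on Iic t
  have hint : ∀ t : ℝ, IntegrableOn φ (Set.Iic t) := by
    intro t
    have hec : Continuous fun s : ℝ => Real.exp (s / τ) :=
      Real.continuous_exp.comp (continuous_id.div_const τ)
    have he : IntegrableOn (fun s : ℝ => Real.exp (s / τ)) (Set.Iic t) := by
      refine integrableOn_Iic_of_intervalIntegral_norm_bounded (τ * Real.exp (t / τ)) t
        (fun y : ℝ => (hec.intervalIntegrable y t).1) Filter.tendsto_id ?_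
      filter_upwards [Filter.eventually_le_atBot t] with y hy
      have h1 : ∀ s : ℝ, ‖Real.exp (s / τ)‖ = Real.exp (s / τ) := fun s => by
        rw [Real.norm_eq_abs, abs_of_pos (Real.exp_pos _)]
      simp_rw [h1]
      rw [intervalIntegral.integral_comp_div (f := Real.exp) (c := τ) (ne_of_gt hτ),
        integral_exp, smul_eq_mul]
      have h2 : 0 < Real.exp (y / τ) := Real.exp_pos _
      nlinarith [Real.exp_pos (t / τ)]
    have hC : 0 ≤ C := le_trans (abs_nonneg _) (hbdd 0)
    refine Integrable.mono' (he.const_mul C) (hφcont.aestronglyMeasurable.restrict) ?_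
    refine Filter.Eventually.of_forall (fun s => ?_)
    have : ‖φ s‖ = |w s| * Real.exp (s / τ) := by
      rw [hφ, Real.norm_eq_abs, abs_mul, abs_of_pos (Real.exp_pos _)]
    rw [this]
    exact mul_le_mul_of_nonneg_right (hbdd s) (Real.exp_pos _).le
  -- rewrite g and y in terms of φ
  have key : ∀ t s : ℝ, w s * (1 / τ * Real.exp (-((t - s) / τ)))
      = Real.exp (-(t / τ)) / τ * φ s := by
    intro t s
    rw [hφ, show -((t - s) / τ) = -(t / τ) + s / τ by ring, Real.exp_add]
    ring
  have hgt : ∀ t : ℝ, g t = Real.exp (-(t / τ)) / τ * ∫ s in Set.Iic t, φ s := by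
    intro t
    rw [hg t]
    simp_rw [key t]
    rw [MeasureTheory.integral_const_mul]
  have hyt : ∀ t : ℝ, y t = Real.exp (-(t / τ)) / τ * ∫ s in (0:ℝ)..t, φ s := by
    intro t
    rw [hy t]
    simp_rw [key t]
    rw [intervalIntegral.integral_const_mul]
  -- g t = exp(-(t/τ)) * g 0 + y t
  have hrel : ∀ t : ℝ, g t = Real.exp (-(t / τ)) * g 0 + y t := by
    intro t
    have hsplit : (∫ s in Set.Iic t, φ s) - ∫ s in Set.Iic (0:ℝ), φ s
        = ∫ s in (0:ℝ)..t, φ s := intervalIntegral.integral_Iic_sub_Iic (hint 0) (hint t)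
    rw [hgt, hyt, hgt 0, ← hsplit]
    simp only [neg_zero, zero_div, Real.exp_zero]
    ring
  -- derivative of F t = ∫ 0..t φ
  have hF : ∀ b : ℝ, HasDerivAt (fun u : ℝ => ∫ s in (0:ℝ)..u, φ s) (φ b) b := by
    intro b
    exact intervalIntegral.integral_hasDerivAt_right (hφcont.intervalIntegrable 0 b)
      (hφcont.stronglyMeasurable.stronglyMeasurableAtFilter) hφcont.continuousAt
  -- derivative of e t = exp(-(t/τ))
  have hE : ∀ b : ℝ, HasDerivAt (fun t : ℝ => Real.exp (-(t / τ)))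
      (Real.exp (-(b / τ)) * (-(1 / τ))) b := by
    intro b
    have h1 : HasDerivAt (fun t : ℝ => -(t / τ)) (-(1 / τ)) b := by
      exact ((hasDerivAt_id b).div_const τ).neg
    exact h1.exp
  set s₀ : ℝ := T_on + t' with hs₀
  -- derivative of y at any point b
  have hyderiv : ∀ b : ℝ, HasDerivAt y
      (Real.exp (-(b / τ)) * (-(1 / τ)) / τ * (∫ s in (0:ℝ)..b, φ s)
        + Real.exp (-(b / τ)) / τ * φ b) b := by
    intro b
    have h2 : HasDerivAt (fun t : ℝ => Real.exp (-(t / τ)) / τ)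
        (Real.exp (-(b / τ)) * (-(1 / τ)) / τ) b := (hE b).div_const τ
    have := h2.mul (hF b)
    have heq : y = fun t => Real.exp (-(t / τ)) / τ * ∫ s in (0:ℝ)..t, φ s :=
      funext hyt
    rw [heq]
    exact this
  set Dy : ℝ := Real.exp (-(s₀ / τ)) * (-(1 / τ)) / τ * (∫ s in (0:ℝ)..s₀, φ s)
      + Real.exp (-(s₀ / τ)) / τ * φ s₀ with hDy
  -- derivative of g at s₀
  have hgderiv : HasDerivAt g (Real.exp (-(s₀ / τ)) * (-(1 / τ)) * g 0 + Dy) s₀ := by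
    have h := ((hE s₀).mul_const (g 0)).add (hyderiv s₀)
    exact h.congr_of_eventuallyEq (Filter.Eventually.of_forall hrel)
  have hdg : deriv g s₀ = Real.exp (-(s₀ / τ)) * (-(1 / τ)) * g 0 + Dy := hgderiv.deriv
  -- now differentiate ξ
  have hξeq : ξ = fun t' => (I_c * Real.exp (-(T_off / τ)) - (I_p - m₂ * T_off))
      * (Real.exp (-((T_on + t') / τ)) - Real.exp (-(T_on / τ)))
      + y (T_on + t') - y T_on := funext hξ
  rw [hξeq]
  have hinner : HasDerivAt (fun u : ℝ => T_on + u) 1 t' := by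
    simpa using (hasDerivAt_id t').const_add T_on
  have hycomp : HasDerivAt (fun u : ℝ => y (T_on + u)) (Dy * 1) t' :=
    (hyderiv s₀).comp t' hinner
  have hEcomp : HasDerivAt (fun u : ℝ => Real.exp (-((T_on + u) / τ)))
      (Real.exp (-(s₀ / τ)) * (-(1 / τ)) * 1) t' := (hE s₀).comp t' hinner
  have hmain : HasDerivAt (fun u : ℝ =>
      (I_c * Real.exp (-(T_off / τ)) - (I_p - m₂ * T_off))
        * (Real.exp (-((T_on + u) / τ)) - Real.exp (-(T_on / τ)))
      + y (T_on + u) - y T_on)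
      ((I_c * Real.exp (-(T_off / τ)) - (I_p - m₂ * T_off))
        * (Real.exp (-(s₀ / τ)) * (-(1 / τ)) * 1) + Dy * 1) t' := by
    exact ((((hEcomp.sub_const (Real.exp (-(T_on / τ)))).const_mul _).add
      hycomp).sub_const (y T_on))
  convert hmain using 1
  rw [hdg]
  rw [show -((T_on + t' + T_off) / τ) = -(s₀ / τ) + -(T_off / τ) by rw [hs₀]; ring,
    Real.exp_add]
  have hτ' : τ ≠ 0 := ne_of_gt hτ
  field_simp
  ring
end
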